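/- For all nonnegative integers k, l, m, the determinant of the matrix M_{k,l,m} satisfies 8·det(M_{k,l,m}) = (−2)^{k+l+m}·(128 − 16(k+l+m) + k·l·m); equivalently, det(M_{k,l,m}) = −(−2)^{k+l+m−3}(128 − 16(k+l+m) + klm). -/

import Mathlib

/-- Axis (0 = x, 1 = y, 2 = z) of a basis index `t ≥ 3` (curve classes):
indices `3,…,2+k` are `C_{x,i}`, indices `3+k,…,2+k+l` are `C_{y,i}`,
and the remaining indices are `C_{z,i}`. -/
def axOf (k l : ℕ) (t : ℕ) : ℕ :=
  if t < 3 + k then 0 else if t < 3 + k + l then 1 else 2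

/-- The intersection matrix `M_{k,l,m}` in the basis
`E_x, E_y, E_z, C_{x,1},…,C_{x,k}, C_{y,1},…,C_{y,l}, C_{z,1},…,C_{z,m}`. -/
def MM (k l m : ℕ) : Matrix (Fin (3 + k + l + m)) (Fin (3 + k + l + m)) ℤ :=
  fun i j =>
    if (i : ℕ) < 3 then
      if (j : ℕ) < 3 then (if i = j then 0 else 2)
      else (if (i : ℕ) = axOf k l j then 1 else 0)
    else
      if (j : ℕ) < 3 then (if (j : ℕ) = axOf k l i then 1 else 0)
      else (if i = j then -2 else 0)

open Matrix Finset

lemma sum_lt_nat (n c : ℕ) :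
    (∑ t ∈ Finset.range n, if t < c then 1 else 0) = min c n := by
  induction n with
  | zero => simp
  | succ n ih =>
    rw [Finset.sum_range_succ, ih]
    split_ifs with h <;> omega

lemma sum_lt_rat (n c : ℕ) :
    (∑ t ∈ Finset.range n, if t < c then (1:ℚ) else 0) = ((min c n : ℕ) : ℚ) := by
  rw [← sum_lt_nat n c]
  push_cast
  rfl


/-- `8·det(M_{k,l,m}) = (−2)^{k+l+m}·(128 − 16(k+l+m) + klm)`, i.e.
`det(M_{k,l,m}) = −(−2)^{k+l+m−3}(128 − 16(k+l+m) + klm)`. -/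
theorem det_MM (k l m : ℕ) :
    8 * (MM k l m).det =
      (-2 : ℤ) ^ (k + l + m) *
        (128 - 16 * ((k : ℤ) + l + m) + (k : ℤ) * l * m) := by
  classical
  set N := k + l + m with hN
  have hNe : 3 + k + l + m = 3 + N := by omega
  let A : Matrix (Fin 3) (Fin 3) ℚ := fun a b => if a = b then 0 else 2
  let B : Matrix (Fin 3) (Fin N) ℚ :=
    fun a t => if (a : ℕ) = axOf k l (3 + (t : ℕ)) then 1 else 0
  let C : Matrix (Fin N) (Fin 3) ℚ :=
    fun t a => if (a : ℕ) = axOf k l (3 + (t : ℕ)) then 1 else 0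
  let D : Matrix (Fin N) (Fin N) ℚ := (-2 : ℚ) • 1
  let e : Fin 3 ⊕ Fin N ≃ Fin (3 + k + l + m) :=
    finSumFinEquiv.trans (finCongr hNe.symm)
  have hvl : ∀ a : Fin 3, ((e (Sum.inl a)) : ℕ) = (a : ℕ) := by
    intro a; simp [e, finSumFinEquiv]
  have hvr : ∀ t : Fin N, ((e (Sum.inr t)) : ℕ) = 3 + (t : ℕ) := by
    intro t; simp [e, finSumFinEquiv]
  have key : ∀ p q, (((MM k l m) (e p) (e q) : ℤ) : ℚ) = fromBlocks A B C D p q := by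
    intro p q
    rcases p with a | t <;> rcases q with b | s
    · have ha := a.isLt; have hb := b.isLt
      simp only [MM, fromBlocks, Sum.elim_inl, hvl, hvr, Fin.ext_iff, A]
      split_ifs <;> first | omega | (simp_all [Matrix.one_apply, Fin.ext_iff]; done)
    · have ha := a.isLt
      simp only [MM, fromBlocks, Sum.elim_inl, Sum.elim_inr, hvl, hvr, Fin.ext_iff, B]
      split_ifs <;> first | omega | (simp_all [Matrix.one_apply, Fin.ext_iff]; done)
    · have hb := b.isLt
      simp only [MM, fromBlocks, Sum.elim_inl, Sum.elim_inr, hvl, hvr, Fin.ext_iff, C]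
      split_ifs <;> first | omega | (simp_all [Matrix.one_apply, Fin.ext_iff]; done)
    · simp only [MM, fromBlocks, Sum.elim_inr, hvl, hvr, Fin.ext_iff, D,
        Matrix.smul_apply, Matrix.one_apply, smul_eq_mul]
      split_ifs <;> first | omega | (simp_all [Matrix.one_apply, Fin.ext_iff]; done)
  have hmap : (MM k l m).map (Int.cast : ℤ → ℚ) =
      (fromBlocks A B C D).submatrix e.symm e.symm := by
    funext i j
    have := key (e.symm i) (e.symm j)
    simpa [Matrix.map_apply, Matrix.submatrix_apply] using this
  letI instD : Invertible D := ⟨(-2⁻¹ : ℚ) • 1, by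
      simp only [D, smul_mul_smul_comm, Matrix.one_mul]
      norm_num, by
      simp only [D, smul_mul_smul_comm, Matrix.one_mul]
      norm_num⟩
  have hinv : ⅟D = (-2⁻¹ : ℚ) • 1 := rfl
  have hdetq : (((MM k l m).det : ℤ) : ℚ)
      = D.det * (A - (-2⁻¹ : ℚ) • (B * C)).det := by
    have h1 : (((MM k l m).det : ℤ) : ℚ) = ((MM k l m).map (Int.cast : ℤ → ℚ)).det :=
      RingHom.map_det (Int.castRingHom ℚ) (MM k l m)
    rw [h1, hmap, Matrix.det_submatrix_equiv_self, Matrix.det_fromBlocks₂₂, hinv]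
    congr 2
    rw [Matrix.mul_smul, Matrix.mul_one, Matrix.smul_mul]
  have hDdet : D.det = (-2 : ℚ) ^ N := by
    rw [show D = (-2 : ℚ) • 1 from rfl, Matrix.det_smul, Matrix.det_one,
      Fintype.card_fin, mul_one]
  -- axis description
  have hax : ∀ t : Fin N, axOf k l (3 + (t : ℕ)) =
      if (t : ℕ) < k then 0 else if (t : ℕ) < k + l then 1 else 2 := by
    intro t
    unfold axOf
    split_ifs <;> omega
  -- diagonal sums
  have h0 : ∀ t : Fin N, B 0 t * C t 0 = (if (t : ℕ) < k then (1:ℚ) else 0) := by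
    intro t
    simp only [B, C, hax, Fin.val_zero]
    split_ifs <;> first | (norm_num; done) | omega | (simp_all; done)
  have h1 : ∀ t : Fin N, B 1 t * C t 1 =
      (if (t : ℕ) < k + l then (1:ℚ) else 0) - (if (t : ℕ) < k then (1:ℚ) else 0) := by
    intro t
    simp only [B, C, hax, Fin.val_one]
    split_ifs <;> first | (norm_num; done) | omega | (simp_all; done)
  have h2 : ∀ t : Fin N, B 2 t * C t 2 =
      1 - (if (t : ℕ) < k + l then (1:ℚ) else 0) := by
    intro t
    simp only [B, C, hax, Fin.val_two]
    split_ifs <;> first | (norm_num; done) | omega | (simp_all; done)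
  have hcross : ∀ (a b : Fin 3), (a : ℕ) ≠ (b : ℕ) → ∀ t : Fin N, B a t * C t b = 0 := by
    intro a b hab t
    simp only [B, C]
    split_ifs with u v
    · exact absurd (u.trans v.symm) hab
    all_goals norm_num
  have slt : ∀ c : ℕ, c ≤ N → (∑ t : Fin N, (if (t : ℕ) < c then (1:ℚ) else 0)) = c := by
    intro c hc
    rw [Fin.sum_univ_eq_sum_range (fun t => if t < c then (1:ℚ) else 0) N, sum_lt_rat,
      Nat.min_eq_left hc]
  have S00 : (B * C) 0 0 = (k : ℚ) := by
    rw [Matrix.mul_apply, Finset.sum_congr rfl (fun t _ => h0 t), slt k (by omega)]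
  have S11 : (B * C) 1 1 = (l : ℚ) := by
    rw [Matrix.mul_apply, Finset.sum_congr rfl (fun t _ => h1 t), Finset.sum_sub_distrib,
      slt (k + l) (by omega), slt k (by omega)]
    push_cast; ring
  have S22 : (B * C) 2 2 = (m : ℚ) := by
    rw [Matrix.mul_apply, Finset.sum_congr rfl (fun t _ => h2 t), Finset.sum_sub_distrib,
      slt (k + l) (by omega), Finset.sum_const, Finset.card_univ, Fintype.card_fin, hN]
    push_cast
    ring
  have Scross : ∀ (a b : Fin 3), (a : ℕ) ≠ (b : ℕ) → (B * C) a b = 0 := by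
    intro a b hab
    rw [Matrix.mul_apply, Finset.sum_congr rfl (fun t _ => hcross a b hab t),
      Finset.sum_const, smul_zero]
  set E : Matrix (Fin 3) (Fin 3) ℚ := A - (-2⁻¹ : ℚ) • (B * C) with hE
  have E00 : E 0 0 = (k : ℚ) / 2 := by
    rw [hE, Matrix.sub_apply, Matrix.smul_apply, S00]
    simp only [smul_eq_mul, A]
    norm_num
    ring
  have E11 : E 1 1 = (l : ℚ) / 2 := by
    rw [hE, Matrix.sub_apply, Matrix.smul_apply, S11]
    simp only [smul_eq_mul, A]
    norm_num
    ring
  have E22 : E 2 2 = (m : ℚ) / 2 := by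
    rw [hE, Matrix.sub_apply, Matrix.smul_apply, S22]
    simp only [smul_eq_mul, A]
    norm_num
    ring
  have Eoff : ∀ a b : Fin 3, (a : ℕ) ≠ (b : ℕ) → E a b = 2 := by
    intro a b hab
    have hab' : a ≠ b := fun h => hab (by rw [h])
    rw [hE, Matrix.sub_apply, Matrix.smul_apply, Scross a b hab]
    simp only [smul_eq_mul, A, if_neg hab']
    ring
  have hEdet : E.det = (k : ℚ) * l * m / 8 - 2 * ((k:ℚ) + l + m) + 16 := by
    rw [Matrix.det_fin_three, E00, E11, E22, Eoff 0 1 (by decide), Eoff 0 2 (by decide),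
      Eoff 1 0 (by decide), Eoff 1 2 (by decide), Eoff 2 0 (by decide),
      Eoff 2 1 (by decide)]
    ring
  have final : ((8 * (MM k l m).det : ℤ) : ℚ)
      = (((-2 : ℤ) ^ (k + l + m) *
        (128 - 16 * ((k : ℤ) + l + m) + (k : ℤ) * l * m) : ℤ) : ℚ) := by
    rw [Int.cast_mul, hdetq]
    push_cast
    rw [hDdet, hEdet, hN]
    ring
  exact_mod_cast final
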